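/- Let n₊, μ₊, n₋, μ₋, t be an edge configuration with ⟨n₊,n₋⟩ ≠ −1. Then P_{n₋→n₊}(μ₋) = −μ₊ and P_{n₊→n₋}(μ₊) = −μ₋. -/

import Mathlib

open scoped InnerProductSpace

noncomputable section
open Classical

abbrev E3 : Type := EuclideanSpace ℝ (Fin 3)

/-- Cross product on `E3`. -/
def cross3 (a b : E3) : E3 :=
  (EuclideanSpace.equiv (Fin 3) ℝ).symm
    (crossProduct ((EuclideanSpace.equiv (Fin 3) ℝ) a) ((EuclideanSpace.equiv (Fin 3) ℝ) b))

/-- Geodesic distance on the unit sphere. -/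
def sphDist (n₁ n₂ : E3) : ℝ := Real.arccos ⟪n₁, n₂⟫_ℝ

/-- The logarithmic map of the unit sphere. -/
def sphLog (n₁ n₂ : E3) : E3 :=
  if n₂ = n₁ then 0
  else (Real.arccos ⟪n₁, n₂⟫_ℝ / ‖n₂ - ⟪n₁, n₂⟫_ℝ • n₁‖) • (n₂ - ⟪n₁, n₂⟫_ℝ • n₁)

/-- Parallel transport along the shortest geodesic of the unit sphere. -/
def ptrans (n₁ n₂ ξ : E3) : E3 :=
  ξ - (⟪ξ, n₂⟫_ℝ / (1 + ⟪n₂, n₁⟫_ℝ)) • (n₂ + n₁)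

lemma cross3_apply (a b : E3) (i : Fin 3) :
    cross3 a b i = ![a 1 * b 2 - a 2 * b 1, a 2 * b 0 - a 0 * b 2, a 0 * b 1 - a 1 * b 0] i := by
  fin_cases i <;> simp [cross3, crossProduct] <;> ring

lemma inner3 (a b : E3) : ⟪a, b⟫_ℝ = a 0 * b 0 + a 1 * b 1 + a 2 * b 2 := by
  simp [PiLp.inner_apply, Fin.sum_univ_three, RCLike.inner_apply]
  ring

lemma lagrange3 (u v : E3) :
    ⟪cross3 u v, cross3 u v⟫_ℝ = ⟪u,u⟫_ℝ * ⟪v,v⟫_ℝ - ⟪u,v⟫_ℝ^2 := by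
  simp only [inner3, cross3_apply]
  simp [Fin.isValue]
  ring

lemma cross_cross3 (u v w : E3) :
    cross3 (cross3 u v) w = ⟪u,w⟫_ℝ • v - ⟪v,w⟫_ℝ • u := by
  ext i
  fin_cases i <;>
    simp [cross3_apply, inner3, Fin.sum_univ_three, PiLp.sub_apply, PiLp.smul_apply,
      smul_eq_mul] <;> ring

lemma cross3_neg_left (u v : E3) : cross3 (-u) v = -(cross3 u v) := by
  ext i
  fin_cases i <;> simp [cross3_apply, PiLp.neg_apply] <;> ring

lemma cross3_anticomm (u v : E3) : cross3 u v = -(cross3 v u) := by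
  ext i
  fin_cases i <;> simp [cross3_apply, PiLp.neg_apply] <;> ring

lemma cross3_smul_sub (u v w : E3) (r s : ℝ) :
    cross3 u (r • v - s • w) = r • cross3 u v - s • cross3 u w := by
  ext i
  fin_cases i <;>
    simp [cross3_apply, PiLp.sub_apply, PiLp.smul_apply, smul_eq_mul] <;> ring

theorem parallel_transport_of_co_normals (np μp nm μm t : E3)
    (hnp : ‖np‖ = 1) (hμp : ‖μp‖ = 1) (hnm : ‖nm‖ = 1) (hμm : ‖μm‖ = 1) (ht : ‖t‖ = 1)
    (hcp : cross3 np μp = t) (hcm : cross3 nm μm = -t)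
    (hne : ⟪np, nm⟫_ℝ ≠ -1) :
    ptrans nm np μm = -μp ∧ ptrans np nm μp = -μm := by
  have unit : ∀ x : E3, ‖x‖ = 1 → ⟪x,x⟫_ℝ = 1 := fun x hx => by
    rw [real_inner_self_eq_norm_mul_norm, hx]; norm_num
  have h1 := unit np hnp
  have h2 := unit μp hμp
  have h3 := unit nm hnm
  have h4 := unit μm hμm
  have h5 := unit t ht
  -- orthogonality from Lagrange
  have hop : ⟪np, μp⟫_ℝ = 0 := by
    have hl := lagrange3 np μp
    rw [hcp, h5, h1, h2] at hl
    have : ⟪np, μp⟫_ℝ ^ 2 = 0 := by linarith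
    exact pow_eq_zero_iff (two_ne_zero) |>.mp this
  have hom : ⟪nm, μm⟫_ℝ = 0 := by
    have hl := lagrange3 nm μm
    rw [hcm, inner_neg_neg, h5, h3, h4] at hl
    have : ⟪nm, μm⟫_ℝ ^ 2 = 0 := by linarith
    exact pow_eq_zero_iff (two_ne_zero) |>.mp this
  set a : ℝ := ⟪nm, np⟫_ℝ with ha
  set b : ℝ := ⟪nm, μp⟫_ℝ with hb
  have hanp : ⟪np, nm⟫_ℝ = a := (real_inner_comm np nm).symm
  have hbμp : ⟪μp, nm⟫_ℝ = b := (real_inner_comm μp nm).symm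
  -- μm = b • np - a • μp
  have hμm_eq : μm = b • np - a • μp := by
    have e1 : cross3 (cross3 nm μm) nm = μm := by
      rw [cross_cross3, h3, real_inner_comm nm μm, hom]
      simp
    rw [hcm, cross3_neg_left, ← hcp, cross_cross3, hanp, hbμp] at e1
    rw [← e1, neg_sub]
  -- nm = a • np + b • μp
  have hnm_eq : nm = a • np + b • μp := by
    have e1 : cross3 (cross3 μm nm) μm = nm := by
      rw [cross_cross3, h4, hom]
      simp
    have e2 : cross3 μm nm = t := by
      rw [cross3_anticomm μm nm, hcm]; simp
    rw [e2, hμm_eq, cross3_smul_sub, ← hcp, cross_cross3, cross_cross3,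
        h1, h2, real_inner_comm np μp, hop] at e1
    rw [← e1]
    ext i
    simp only [PiLp.neg_apply, PiLp.add_apply, PiLp.sub_apply, PiLp.smul_apply, smul_eq_mul]
    ring
  -- a² + b² = 1
  have hab : a^2 + b^2 = 1 := by
    have h3' := h3
    nth_rewrite 1 [hnm_eq] at h3'
    rw [inner_add_left, real_inner_smul_left, real_inner_smul_left, hanp, hbμp] at h3'
    nlinarith [h3']
  have ha1 : (1:ℝ) + a ≠ 0 := by
    intro h
    exact hne (by rw [hanp]; linarith)
  have hμmnp : ⟪μm, np⟫_ℝ = b := by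
    rw [hμm_eq, inner_sub_left, real_inner_smul_left, real_inner_smul_left,
        h1, real_inner_comm np μp, hop]
    ring
  have hμpnm : ⟪μp, nm⟫_ℝ = b := hbμp
  have hnmnp : ⟪nm, np⟫_ℝ = a := rfl
  constructor
  · ext i
    simp only [ptrans, hμmnp, hanp, PiLp.sub_apply, PiLp.smul_apply, PiLp.add_apply,
      PiLp.neg_apply, smul_eq_mul]
    rw [hμm_eq, hnm_eq]
    simp only [PiLp.sub_apply, PiLp.add_apply, PiLp.smul_apply, smul_eq_mul]
    field_simp
    linear_combination (-(μp i)) * hab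
  · ext i
    simp only [ptrans, hμpnm, hnmnp, PiLp.sub_apply, PiLp.smul_apply, PiLp.add_apply,
      PiLp.neg_apply, smul_eq_mul]
    rw [hμm_eq, hnm_eq]
    simp only [PiLp.sub_apply, PiLp.add_apply, PiLp.smul_apply, PiLp.neg_apply, smul_eq_mul]
    field_simp
    linear_combination (-(μp i)) * hab
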